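/- Let ν > 0, μ ≥ 1 with μ > ν/2 − 1, σ > 0, γ₀ > 0, and set γ := γ₀σ and C₀ := γ²(T*T)^μ. Then ‖Φ_MAP‖_Y ≤ γ₀^{1/(μ+1)}‖φ‖_X. -/

import Mathlib

open scoped RealInnerProductSpace


private lemma dyadic_bound {f : ℝ → ℝ} {a b : ℝ} (hab : a ≤ b)
    (hmid : ∀ x ∈ Set.Icc a b, ∀ y ∈ Set.Icc a b, f ((x + y) / 2) ≤ (f x + f y) / 2) :
    ∀ n : ℕ, ∀ k : ℕ, k ≤ 2 ^ n →
      f (a + ((k : ℝ) / 2 ^ n) * (b - a)) ≤ f a + ((k : ℝ) / 2 ^ n) * (f b - f a) := by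
  have hmem : ∀ t : ℝ, 0 ≤ t → t ≤ 1 → a + t * (b - a) ∈ Set.Icc a b := by
    intro t h0 h1
    constructor <;> nlinarith
  intro n
  induction n with
  | zero =>
      intro k hk
      interval_cases k <;> simp
  | succ n ih =>
      intro k hk
      have h2n : ((2:ℝ)^n) ≠ 0 := by positivity
      rcases Nat.even_or_odd k with ⟨j, hj⟩ | ⟨j, hj⟩
      · have hj' : j ≤ 2 ^ n := by omega
        have hcast : ((k : ℝ)) / 2 ^ (n + 1) = (j : ℝ) / 2 ^ n := by
          subst hj; push_cast; rw [pow_succ]; field_simp; ring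
        rw [hcast]
        exact ih j hj'
      · have hj1 : j + 1 ≤ 2 ^ n := by omega
        have hj0 : 0 ≤ (j:ℝ) / 2 ^ n := by positivity
        have hj0' : (j:ℝ) / 2 ^ n ≤ 1 := by
          rw [div_le_one (by positivity)]; exact_mod_cast (show j ≤ 2 ^ n by omega)
        have hj10 : 0 ≤ ((j:ℝ) + 1) / 2 ^ n := by positivity
        have hj11 : ((j:ℝ) + 1) / 2 ^ n ≤ 1 := by
          rw [div_le_one (by positivity)]; exact_mod_cast hj1
        have hxm := hmem _ hj0 hj0'
        have hym := hmem _ hj10 hj11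
        have key := hmid _ hxm _ hym
        have h1 := ih j (by omega)
        have h2 := ih (j + 1) hj1
        push_cast at h2
        have hpt : a + ((k : ℝ) / 2 ^ (n + 1)) * (b - a)
            = ((a + ((j:ℝ) / 2 ^ n) * (b - a)) + (a + (((j:ℝ) + 1) / 2 ^ n) * (b - a))) / 2 := by
          subst hj; push_cast; rw [pow_succ]; field_simp; ring
        have hcoef : ((k : ℝ)) / 2 ^ (n + 1)
            = ((j : ℝ) / 2 ^ n + ((j : ℝ) + 1) / 2 ^ n) / 2 := by
          subst hj; push_cast; rw [pow_succ]; field_simp; ring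
        rw [hpt, hcoef]
        have hring : f a + (((j : ℝ) / 2 ^ n + ((j : ℝ) + 1) / 2 ^ n) / 2) * (f b - f a)
            = ((f a + ((j:ℝ) / 2 ^ n) * (f b - f a))
              + (f a + (((j:ℝ) + 1) / 2 ^ n) * (f b - f a))) / 2 := by ring
        rw [hring]
        exact le_trans key (by linarith)

private lemma interp_bound {f : ℝ → ℝ} {a b : ℝ} (hab : a < b)
    (hcont : ContinuousOn f (Set.Icc a b))
    (hmid : ∀ x ∈ Set.Icc a b, ∀ y ∈ Set.Icc a b, f ((x + y) / 2) ≤ (f x + f y) / 2) :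
    ∀ t ∈ Set.Icc (0:ℝ) 1, f (a + t * (b - a)) ≤ f a + t * (f b - f a) := by
  intro t ht
  obtain ⟨ht0, ht1⟩ := ht
  set d : ℕ → ℝ := fun n => (⌊t * 2 ^ n⌋₊ : ℝ) / 2 ^ n with hd
  have hfl : ∀ n : ℕ, ⌊t * 2 ^ n⌋₊ ≤ 2 ^ n := by
    intro n
    have h1 : t * 2 ^ n ≤ ((2 ^ n : ℕ) : ℝ) := by
      push_cast
      nlinarith [pow_pos (show (0:ℝ) < 2 by norm_num) n]
    calc ⌊t * 2 ^ n⌋₊ ≤ ⌊((2 ^ n : ℕ) : ℝ)⌋₊ := Nat.floor_le_floor h1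
      _ = 2 ^ n := Nat.floor_natCast _
  have hdle : ∀ n, d n ≤ t := by
    intro n
    rw [hd]
    simp only
    rw [div_le_iff₀ (by positivity)]
    exact Nat.floor_le (by positivity)
  have hd0 : ∀ n, 0 ≤ d n := by intro n; positivity
  have hdge : ∀ n, t - (1/2) ^ n ≤ d n := by
    intro n
    have h1 : t * 2 ^ n - 1 < (⌊t * 2 ^ n⌋₊ : ℝ) := by
      have := Nat.lt_floor_add_one (t * 2 ^ n)
      linarith
    rw [hd]
    simp only
    rw [le_div_iff₀ (by positivity)]
    have h2 : (1/2:ℝ) ^ n * 2 ^ n = 1 := by rw [← mul_pow]; norm_num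
    nlinarith
  have hdtend : Filter.Tendsto d Filter.atTop (nhds t) := by
    apply tendsto_of_tendsto_of_tendsto_of_le_of_le
      (g := fun n : ℕ => t - (1/2:ℝ) ^ n) (h := fun _ : ℕ => t)
    · have h' : Filter.Tendsto (fun n : ℕ => (1/2:ℝ) ^ n) Filter.atTop (nhds 0) :=
        tendsto_pow_atTop_nhds_zero_of_lt_one (by norm_num) (by norm_num)
      simpa using Filter.Tendsto.const_sub t h'
    · exact tendsto_const_nhds
    · exact hdge
    · exact hdle
  have hbound : ∀ n, f (a + d n * (b - a)) ≤ f a + d n * (f b - f a) := fun n =>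
    dyadic_bound hab.le hmid n _ (hfl n)
  set F : ℝ → ℝ := fun s => f (a + s * (b - a)) with hF
  have hmaps : Set.MapsTo (fun s : ℝ => a + s * (b - a)) (Set.Icc (0:ℝ) 1) (Set.Icc a b) := by
    intro s hs
    simp only [Set.mem_Icc] at hs ⊢
    constructor <;> nlinarith [hs.1, hs.2]
  have hFcont : ContinuousOn F (Set.Icc (0:ℝ) 1) :=
    hcont.comp (Continuous.continuousOn (by continuity)) hmaps
  have htmem : t ∈ Set.Icc (0:ℝ) 1 := ⟨ht0, ht1⟩
  have hdin : Filter.Tendsto d Filter.atTop (nhdsWithin t (Set.Icc (0:ℝ) 1)) :=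
    tendsto_nhdsWithin_of_tendsto_nhds_of_eventually_within d hdtend
      (Filter.Eventually.of_forall fun n => ⟨hd0 n, (hdle n).trans ht1⟩)
  have h1 : Filter.Tendsto (fun n => F (d n)) Filter.atTop (nhds (F t)) :=
    ((hFcont t htmem).tendsto).comp hdin
  have h2 : Filter.Tendsto (fun n => f a + d n * (f b - f a)) Filter.atTop
      (nhds (f a + t * (f b - f a))) := by
    exact (((continuous_const.add (continuous_id.mul continuous_const)).tendsto t).comp hdtend)
  exact le_of_tendsto_of_tendsto' h1 h2 hbound

private lemma log_interp {q : ℝ → ℝ} {a b : ℝ} (ha : 0 < a) (hab : a < b)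
    (hcont : ContinuousOn q (Set.Ioi (0:ℝ)))
    (hpos : ∀ s ∈ Set.Icc a b, 0 < q s)
    (hmid : ∀ x ∈ Set.Icc a b, ∀ y ∈ Set.Icc a b, (q ((x + y) / 2)) ^ 2 ≤ q x * q y) :
    ∀ t ∈ Set.Icc (0:ℝ) 1, q (a + t * (b - a)) ≤ (q b) ^ t * (q a) ^ (1 - t) := by
  intro t ht
  have hsub : Set.Icc a b ⊆ Set.Ioi (0:ℝ) := fun s hs => lt_of_lt_of_le ha hs.1
  have hlogcont : ContinuousOn (fun s => Real.log (q s)) (Set.Icc a b) :=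
    (hcont.mono hsub).log (fun s hs => (hpos s hs).ne')
  have hlogmid : ∀ x ∈ Set.Icc a b, ∀ y ∈ Set.Icc a b,
      Real.log (q ((x + y) / 2)) ≤ (Real.log (q x) + Real.log (q y)) / 2 := by
    intro x hx y hy
    have hmxy : (x + y) / 2 ∈ Set.Icc a b :=
      ⟨by linarith [hx.1, hy.1], by linarith [hx.2, hy.2]⟩
    have h := hmid x hx y hy
    have h2 : Real.log ((q ((x + y) / 2)) ^ 2) ≤ Real.log (q x * q y) :=
      Real.log_le_log (pow_pos (hpos _ hmxy) 2) h
    rw [Real.log_pow, Real.log_mul (hpos x hx).ne' (hpos y hy).ne'] at h2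
    push_cast at h2
    linarith
  have key := interp_bound hab hlogcont hlogmid t ht
  have hptm : a + t * (b - a) ∈ Set.Icc a b :=
    ⟨by nlinarith [ht.1, ht.2], by nlinarith [ht.1, ht.2]⟩
  have hqpt := hpos _ hptm
  have hqa := hpos a ⟨le_rfl, hab.le⟩
  have hqb := hpos b ⟨hab.le, le_rfl⟩
  have hrw : q (a + t * (b - a)) = Real.exp (Real.log (q (a + t * (b - a)))) :=
    (Real.exp_log hqpt).symm
  rw [hrw, Real.rpow_def_of_pos hqb, Real.rpow_def_of_pos hqa, ← Real.exp_add]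
  apply Real.exp_le_exp.mpr
  calc Real.log (q (a + t * (b - a)))
      ≤ Real.log (q a) + t * (Real.log (q b) - Real.log (q a)) := key
    _ = Real.log (q b) * t + Real.log (q a) * (1 - t) := by ring

set_option maxHeartbeats 1000000 in
/-- Let `ν > 0`, `μ ≥ 1` with `μ > ν/2 − 1`, `σ > 0`, `γ₀ > 0`, `γ = γ₀σ`, and
`C₀ = γ²(T*T)^μ`.  Then `‖Φ_MAP‖ ≤ γ₀^{1/(μ+1)}‖φ‖`, where
`Φ_MAP = T C₀^{1/2}(C₀^{1/2}T*TC₀^{1/2} + σ²Id)⁻¹ C₀^{1/2}φ`.  The operator power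
`(T*T)^s` is encoded by the family `pow`, uniquely determined by the hypotheses below;
the positive square root of `C₀ = γ² (T*T)^μ` is `S := γ • (T*T)^{μ/2}`, and `B` denotes
the inverse `(C₀^{1/2}T*TC₀^{1/2} + σ²Id)⁻¹`. -/
theorem probe_norm_estimate_a_priori
    {X Y : Type*}
    [NormedAddCommGroup X] [InnerProductSpace ℝ X] [CompleteSpace X]
    [TopologicalSpace.SeparableSpace X]
    [NormedAddCommGroup Y] [InnerProductSpace ℝ Y] [CompleteSpace Y]
    [TopologicalSpace.SeparableSpace Y]
    (T : X →L[ℝ] Y) (φ : X)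
    (ν μ σ γ₀ γ : ℝ) (hν : 0 < ν) (hμ : 1 ≤ μ) (hμν : ν / 2 - 1 < μ)
    (hσ : 0 < σ) (hγ₀ : 0 < γ₀) (hγ : γ = γ₀ * σ)
    -- `pow s` is the operator power `(T*T)^s`, characterized by:
    (pow : ℝ → (X →L[ℝ] X))
    (hpow0 : pow 0 = 1)
    (hpow1 : pow 1 = (ContinuousLinearMap.adjoint T) ∘L T)
    (hpowsa : ∀ s : ℝ, 0 < s → IsSelfAdjoint (pow s))
    (hpowpos : ∀ s : ℝ, 0 < s → ∀ x : X, 0 ≤ ⟪(pow s) x, x⟫)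
    (hpowadd : ∀ s t : ℝ, 0 < s → 0 < t → pow (s + t) = pow s ∘L pow t)
    (hpowcont : ContinuousOn pow (Set.Ioi (0 : ℝ)))
    -- `S = γ • (T*T)^{μ/2}` is the positive square root of `C₀ = γ² (T*T)^μ`
    (S : X →L[ℝ] X) (hSdef : S = γ • pow (μ / 2))
    -- `B` is the inverse of `C₀^{1/2} T* T C₀^{1/2} + σ² Id`
    (B : X →L[ℝ] X)
    (hB : B ∘L (S ∘L (ContinuousLinearMap.adjoint T) ∘L T ∘L S + σ ^ 2 • 1) = 1)
    (hB' : (S ∘L (ContinuousLinearMap.adjoint T) ∘L T ∘L S + σ ^ 2 • 1) ∘L B = 1) :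
    ‖T (S (B (S φ)))‖ ≤ γ₀ ^ (1 / (μ + 1)) * ‖φ‖ := by
  have hμ0 : (0:ℝ) < μ := lt_of_lt_of_le one_pos hμ
  have hμ2 : (0:ℝ) < μ / 2 := by linarith
  have hγpos : (0:ℝ) < γ := by rw [hγ]; positivity
  -- pointwise semigroup law
  have happly : ∀ s t : ℝ, 0 < s → 0 < t → ∀ v : X, pow (s + t) v = pow s (pow t v) := by
    intro s t hs ht v
    rw [hpowadd s t hs ht]; rfl
  -- self-adjointness in inner products
  have hsa : ∀ s : ℝ, 0 < s → ∀ u v : X, ⟪pow s u, v⟫ = ⟪u, pow s v⟫ := by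
    intro s hs u v
    rw [← ContinuousLinearMap.adjoint_inner_left, (hpowsa s hs).adjoint_eq]
  -- reduction of S T* T S to γ² pow(μ+1)
  have hM : S ∘L (ContinuousLinearMap.adjoint T) ∘L T ∘L S = γ ^ 2 • pow (μ + 1) := by
    ext v
    simp only [ContinuousLinearMap.comp_apply, ContinuousLinearMap.smul_apply, hSdef,
      map_smul]
    have h1 : (ContinuousLinearMap.adjoint T) (T (pow (μ/2) v)) = pow 1 (pow (μ/2) v) := by
      rw [hpow1]; rfl
    rw [h1, ← happly 1 (μ/2) one_pos hμ2 v, ← happly (μ/2) (1 + μ/2) hμ2 (by linarith) v]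
    have he : μ / 2 + (1 + μ / 2) = μ + 1 := by ring
    rw [he, smul_smul, ← sq]
  rw [hM] at hB hB'
  set M : X →L[ℝ] X := γ ^ 2 • pow (μ + 1) + σ ^ 2 • 1 with hMdef
  -- pow(μ/2) commutes with M, hence with B
  have hpm : ∀ v : X, pow (μ/2) (M v) = M (pow (μ/2) v) := by
    intro v
    simp only [hMdef, ContinuousLinearMap.add_apply, ContinuousLinearMap.smul_apply,
      ContinuousLinearMap.one_apply, map_smul, map_add]
    congr 2
    rw [← happly (μ/2) (μ+1) hμ2 (by linarith) v, ← happly (μ+1) (μ/2) (by linarith) hμ2 v,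
      add_comm]
  have hBp : ∀ v : X, B (pow (μ/2) v) = pow (μ/2) (B v) := by
    intro v
    have h1 : M (B v) = v := by
      have := congrArg (fun (A : X →L[ℝ] X) => A v) hB'
      simpa using this
    have h2 : ∀ w : X, B (M w) = w := by
      intro w
      have := congrArg (fun (A : X →L[ℝ] X) => A w) hB
      simpa using this
    calc B (pow (μ/2) v) = B (pow (μ/2) (M (B v))) := by rw [h1]
      _ = B (M (pow (μ/2) (B v))) := by rw [hpm]
      _ = pow (μ/2) (B v) := h2 _
  set ψ : X := B φ with hψ
  -- the probe vector
  have hx : S (B (S φ)) = γ ^ 2 • pow μ ψ := by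
    rw [hSdef]
    simp only [ContinuousLinearMap.smul_apply, map_smul, hBp φ]
    rw [← happly (μ/2) (μ/2) hμ2 hμ2 (B φ)]
    have he : μ / 2 + μ / 2 = μ := by ring
    rw [he, smul_smul, ← sq, ← hψ]
  -- φ in terms of ψ
  have hφψ : φ = γ ^ 2 • pow (μ + 1) ψ + σ ^ 2 • ψ := by
    have h1 : M (B φ) = φ := by
      have := congrArg (fun (A : X →L[ℝ] X) => A φ) hB'
      simpa using this
    rw [← h1, hψ]
    simp [hMdef]
  set q : ℝ → ℝ := fun s => ⟪pow s ψ, ψ⟫ with hqdef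
  have hq_nonneg : ∀ s : ℝ, 0 < s → 0 ≤ q s := fun s hs => hpowpos s hs ψ
  have hq_half : ∀ s : ℝ, 0 < s → q s = ⟪pow (s/2) ψ, pow (s/2) ψ⟫ := by
    intro s hs
    have hs2 : 0 < s / 2 := by linarith
    have hss : s = s/2 + s/2 := by ring
    rw [hqdef]
    simp only
    conv_lhs => rw [hss, happly (s/2) (s/2) hs2 hs2]
    exact hsa (s/2) hs2 _ _
  -- ‖T x‖² = γ⁴ q(2μ+1)
  have hTx : ‖T (S (B (S φ)))‖ ^ 2 = γ ^ 4 * q (2*μ + 1) := by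
    rw [← real_inner_self_eq_norm_sq, ← ContinuousLinearMap.adjoint_inner_left, hx]
    have h1 : (ContinuousLinearMap.adjoint T) (T (γ ^ 2 • pow μ ψ)) =
        pow 1 (γ ^ 2 • pow μ ψ) := by rw [hpow1]; rfl
    rw [h1, map_smul, real_inner_smul_left, real_inner_smul_right]
    have h2 : pow 1 (pow μ ψ) = pow (1 + μ) ψ := (happly 1 μ one_pos hμ0 ψ).symm
    rw [h2]
    have h3 : ⟪pow (1 + μ) ψ, pow μ ψ⟫ = ⟪pow μ (pow (1 + μ) ψ), ψ⟫ :=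
      (hsa μ hμ0 _ _).symm
    rw [h3, ← happly μ (1 + μ) hμ0 (by linarith) ψ]
    have he : μ + (1 + μ) = 2*μ + 1 := by ring
    rw [he, hqdef]
    ring
  -- ‖φ‖² expansion
  have hφn : ‖φ‖ ^ 2 = γ ^ 4 * q (2*μ + 2) + 2 * (γ ^ 2 * σ ^ 2) * q (μ + 1)
      + σ ^ 4 * ‖ψ‖ ^ 2 := by
    conv_lhs => rw [← real_inner_self_eq_norm_sq, hφψ]
    rw [real_inner_add_add_self]
    rw [real_inner_smul_left, real_inner_smul_right, real_inner_smul_left,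
      real_inner_smul_right, real_inner_smul_left, real_inner_smul_right]
    have he : μ + 1 + (μ + 1) = 2*μ + 2 := by ring
    have h1 : ⟪pow (μ+1) ψ, pow (μ+1) ψ⟫ = q (2*μ + 2) := by
      calc ⟪pow (μ+1) ψ, pow (μ+1) ψ⟫
          = ⟪pow (μ+1) (pow (μ+1) ψ), ψ⟫ := (hsa (μ+1) (by linarith) _ _).symm
        _ = ⟪pow (μ + 1 + (μ + 1)) ψ, ψ⟫ := by
            rw [happly (μ+1) (μ+1) (by linarith) (by linarith)]
        _ = q (2*μ + 2) := by rw [hqdef]; simp only; rw [he]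
    have h2 : ⟪pow (μ+1) ψ, ψ⟫ = q (μ + 1) := rfl
    rw [h1, h2, real_inner_self_eq_norm_sq]
    ring
  -- continuity and midpoint property of q
  have hqcont : ContinuousOn q (Set.Ioi (0:ℝ)) := by
    have h1 : ContinuousOn (fun s => pow s ψ) (Set.Ioi (0:ℝ)) :=
      (ContinuousLinearMap.apply ℝ X ψ).continuous.comp_continuousOn hpowcont
    exact h1.inner continuousOn_const
  have ha0 : (0:ℝ) < μ + 1 := by linarith
  have hab : μ + 1 < 2*μ + 2 := by linarith
  have hqmid : ∀ x ∈ Set.Icc (μ+1) (2*μ+2), ∀ y ∈ Set.Icc (μ+1) (2*μ+2),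
      (q ((x + y)/2))^2 ≤ q x * q y := by
    intro x hx y hy
    have hx0 : 0 < x := lt_of_lt_of_le ha0 hx.1
    have hy0 : 0 < y := lt_of_lt_of_le ha0 hy.1
    have h1 : q ((x+y)/2) = ⟪pow (y/2) ψ, pow (x/2) ψ⟫ := by
      rw [hqdef]
      simp only
      have hxy : (x+y)/2 = x/2 + y/2 := by ring
      rw [hxy, happly (x/2) (y/2) (by linarith) (by linarith), hsa (x/2) (by linarith)]
    rw [h1, sq, hq_half x hx0, hq_half y hy0]
    calc ⟪pow (y/2) ψ, pow (x/2) ψ⟫ * ⟪pow (y/2) ψ, pow (x/2) ψ⟫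
        ≤ ⟪pow (y/2) ψ, pow (y/2) ψ⟫ * ⟪pow (x/2) ψ, pow (x/2) ψ⟫ :=
          real_inner_mul_inner_self_le _ _
      _ = ⟪pow (x/2) ψ, pow (x/2) ψ⟫ * ⟪pow (y/2) ψ, pow (y/2) ψ⟫ := mul_comm _ _
  rcases le_or_gt (q (2*μ+1)) 0 with hq0 | hq0
  · -- degenerate case : the probe vanishes
    have h1 : ‖T (S (B (S φ)))‖ ^ 2 ≤ 0 := by
      rw [hTx]
      exact mul_nonpos_of_nonneg_of_nonpos (by positivity) hq0
    have h2 : ‖T (S (B (S φ)))‖ = 0 := by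
      have h3 : ‖T (S (B (S φ)))‖ ^ 2 = 0 := le_antisymm h1 (by positivity)
      exact pow_eq_zero_iff (two_ne_zero) |>.mp h3
    rw [h2]
    exact mul_nonneg (Real.rpow_nonneg hγ₀.le _) (norm_nonneg _)
  · -- main case : q is positive on [μ+1, 2μ+2]
    have hqpos : ∀ s ∈ Set.Icc (μ+1) (2*μ+2), 0 < q s := by
      intro s hs
      rcases lt_or_ge 0 (q s) with h | h
      · exact h
      exfalso
      have hs0 : 0 < s := lt_of_lt_of_le ha0 hs.1
      have hqs : q s = 0 := le_antisymm h (hq_nonneg s hs0)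
      have hz : pow (s/2) ψ = 0 := by
        rw [hq_half s hs0] at hqs
        exact inner_self_eq_zero.mp hqs
      have hlt : s/2 < 2*μ+1 := by
        have h2 := hs.2
        linarith
      have hzero : q (2*μ+1) = 0 := by
        have hd : 2*μ+1 = (2*μ+1 - s/2) + s/2 := by ring
        rw [hqdef]
        simp only
        conv_lhs => rw [hd, happly (2*μ+1-s/2) (s/2) (by linarith) (by linarith), hz]
        simp
      linarith
    set t : ℝ := μ/(μ+1) with htdef
    have ht : t ∈ Set.Icc (0:ℝ) 1 := by
      constructor
      · rw [htdef]; positivity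
      · rw [htdef, div_le_one (by linarith)]; linarith
    have hpt : μ + 1 + t * (2*μ + 2 - (μ + 1)) = 2*μ+1 := by
      rw [htdef]; field_simp; ring
    have hinterp := log_interp ha0 hab hqcont hqpos hqmid t ht
    rw [hpt] at hinterp
    set u : ℝ := 1 - t with hudef
    have hu1 : u = 1/(μ+1) := by rw [hudef, htdef]; field_simp; ring
    have hu0 : 0 ≤ u := by rw [hu1]; positivity
    have htu : t + u = 1 := by rw [hudef]; ring
    set QA : ℝ := q (μ+1) with hQA
    set QB : ℝ := q (2*μ+2) with hQB
    have hQApos : 0 < QA := hqpos _ ⟨le_rfl, by linarith⟩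
    have hQBpos : 0 < QB := hqpos _ ⟨by linarith, le_rfl⟩
    set c : ℝ := γ₀ ^ (1/(μ+1)) with hcdef
    have hcpos : 0 < c := by rw [hcdef]; positivity
    -- key identity : γ⁴ · QB^t · QA^u = c² · (γ⁴QB)^t · (γ²σ²QA)^u
    have hc2 : c^2 = (γ₀^2 : ℝ) ^ u := by
      rw [hcdef, hu1, ← Real.rpow_natCast (γ₀ ^ (1/(μ+1))) 2, ← Real.rpow_mul hγ₀.le,
        ← Real.rpow_natCast γ₀ 2, ← Real.rpow_mul hγ₀.le]
      norm_num
      rw [mul_comm]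
    have hγ4 : γ₀^2 * (γ^2 * σ^2) = γ^4 := by rw [hγ]; ring
    have heq : γ^4 * (QB ^ t * QA ^ u) = c^2 * ((γ^4*QB) ^ t * ((γ^2*σ^2)*QA) ^ u) := by
      have e1 : (γ^4*QB) ^ t = (γ^4 : ℝ) ^ t * QB ^ t :=
        Real.mul_rpow (by positivity) hQBpos.le
      have e2 : ((γ^2*σ^2)*QA) ^ u = ((γ^2*σ^2) : ℝ) ^ u * QA ^ u :=
        Real.mul_rpow (by positivity) hQApos.le
      have e3 : (γ₀^2 : ℝ) ^ u * ((γ^2*σ^2) : ℝ) ^ u = ((γ₀^2 * (γ^2*σ^2)) : ℝ) ^ u :=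
        (Real.mul_rpow (by positivity) (by positivity)).symm
      have e4 : ((γ^4 : ℝ)) ^ u * (γ^4 : ℝ) ^ t = ((γ^4 : ℝ)) ^ (u + t) :=
        (Real.rpow_add (by positivity) u t).symm
      rw [hc2, e1, e2]
      calc γ^4 * (QB ^ t * QA ^ u)
          = ((γ^4 : ℝ)) ^ (u + t) * (QB ^ t * QA ^ u) := by
            rw [add_comm u t, htu, Real.rpow_one]
        _ = ((γ^4 : ℝ)) ^ u * (γ^4 : ℝ) ^ t * (QB ^ t * QA ^ u) := by rw [e4]
        _ = ((γ₀^2 * (γ^2*σ^2)) : ℝ) ^ u * (γ^4 : ℝ) ^ t * (QB ^ t * QA ^ u) := by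
            rw [hγ4]
        _ = (γ₀^2 : ℝ) ^ u * ((γ^2*σ^2) : ℝ) ^ u * (γ^4 : ℝ) ^ t * (QB ^ t * QA ^ u) := by
            rw [e3]
        _ = (γ₀^2 : ℝ) ^ u * ((γ^4 : ℝ) ^ t * QB ^ t * (((γ^2*σ^2) : ℝ) ^ u * QA ^ u)) := by
            ring
    have hgeom : (γ^4*QB) ^ t * ((γ^2*σ^2)*QA) ^ u ≤ t * (γ^4*QB) + u * ((γ^2*σ^2)*QA) :=
      Real.geom_mean_le_arith_mean2_weighted ht.1 hu0 (by positivity) (by positivity) htu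
    have harith : t * (γ^4*QB) + u * ((γ^2*σ^2)*QA)
        ≤ γ^4*QB + 2*(γ^2*σ^2)*QA + σ^4*‖ψ‖^2 := by
      have h1 : t ≤ 1 := ht.2
      have h2 : u ≤ 2 := by rw [hu1]; rw [div_le_iff₀ (by linarith)]; linarith
      have h3 : (0:ℝ) < γ^4*QB := by positivity
      have h4 : (0:ℝ) < γ^2*σ^2*QA := by positivity
      have h5 : (0:ℝ) ≤ σ^4*‖ψ‖^2 := by positivity
      nlinarith
    have hsq : ‖T (S (B (S φ)))‖ ^ 2 ≤ (c * ‖φ‖) ^ 2 := by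
      rw [mul_pow, hφn, hTx]
      calc γ ^ 4 * q (2*μ + 1) ≤ γ^4 * (QB ^ t * QA ^ u) := by
            have := hinterp
            nlinarith [Real.rpow_nonneg hQBpos.le t, Real.rpow_nonneg hQApos.le u,
              pow_pos hγpos 4]
        _ = c^2 * ((γ^4*QB) ^ t * ((γ^2*σ^2)*QA) ^ u) := heq
        _ ≤ c^2 * (γ^4*QB + 2*(γ^2*σ^2)*QA + σ^4*‖ψ‖^2) := by
            have := le_trans hgeom harith
            nlinarith [sq_nonneg c]
        _ = c^2 * (γ ^ 4 * QB + 2 * (γ ^ 2 * σ ^ 2) * QA + σ ^ 4 * ‖ψ‖ ^ 2) := by ring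
    have h := Real.sqrt_le_sqrt hsq
    rwa [Real.sqrt_sq (norm_nonneg _), Real.sqrt_sq (by positivity)] at h
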